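/- Let G is a finite group with action on Euclidean space E without non-zero fixed vectors (E^G = {0}). Then there exists δ < 1 such that for every u ∈ E there is g ∈ G with ‖gu + u‖ ≤ 2δ‖u‖. -/

import Mathlib

theorem stmt_7 {E : Type*} [NormedAddCommGroup E] [InnerProductSpace ℝ E]
    [FiniteDimensional ℝ E] {G : Type*} [Group G] [Finite G]
    (ρ : G →* (E ≃ₗᵢ[ℝ] E))
    (hfix : ∀ v : E, (∀ g : G, ρ g v = v) → v = 0) :
    ∃ δ : ℝ, δ < 1 ∧ ∀ u : E, ∃ g : G, ‖ρ g u + u‖ ≤ 2 * δ * ‖u‖ := by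
  haveI := Fintype.ofFinite G
  refine ⟨Real.sqrt 2 / 2, ?_, ?_⟩
  · nlinarith [Real.sq_sqrt (by norm_num : (2:ℝ) ≥ 0), Real.sqrt_nonneg 2]
  intro u
  -- the averaged vector is fixed, hence zero
  have hv : (∑ g : G, ρ g u) = 0 := by
    apply hfix
    intro h
    have : ρ h (∑ g : G, ρ g u) = ∑ g : G, ρ (h * g) u := by
      rw [map_sum]
      simp [map_mul]
    rw [this]
    exact Fintype.sum_equiv (Equiv.mulLeft h) _ _ (fun g => rfl)
  have hsum : (∑ g : G, (inner ℝ (ρ g u) u : ℝ)) = 0 := by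
    rw [← sum_inner, hv, inner_zero_left]
  -- some g has nonpositive inner product
  have hg : ∃ g : G, (inner ℝ (ρ g u) u : ℝ) ≤ 0 := by
    by_contra hcon
    push_neg at hcon
    have : (0:ℝ) < ∑ g : G, (inner ℝ (ρ g u) u : ℝ) :=
      Finset.sum_pos (fun g _ => hcon g) Finset.univ_nonempty
    linarith
  obtain ⟨g, hg⟩ := hg
  refine ⟨g, ?_⟩
  have hn : ‖ρ g u‖ = ‖u‖ := (ρ g).norm_map u
  have hsq : ‖ρ g u + u‖ ^ 2 ≤ 2 * ‖u‖ ^ 2 := by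
    have := norm_add_sq_real (ρ g u) u
    rw [hn] at this
    nlinarith
  have h2 : 2 * (Real.sqrt 2 / 2) * ‖u‖ = Real.sqrt 2 * ‖u‖ := by ring
  rw [h2]
  calc ‖ρ g u + u‖ = Real.sqrt (‖ρ g u + u‖ ^ 2) := (Real.sqrt_sq (norm_nonneg _)).symm
    _ ≤ Real.sqrt (2 * ‖u‖ ^ 2) := Real.sqrt_le_sqrt hsq
    _ = Real.sqrt 2 * ‖u‖ := by
        rw [Real.sqrt_mul (by norm_num), Real.sqrt_sq (norm_nonneg _)]
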